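/- Let d, r be integers with 0 < r ≤ d and set n = d + r. For every A ∈ Γ_n^d, per(A) ≤ C(d−r, ⌊(d−r)/2⌋) · (⌊(d+r)/2⌋)! · (⌈(d+r)/2⌉)!, where C(·,·) denotes the binomial coefficient. -/

import Mathlib

/-- The permanent of an `n × n` matrix: `per(A) = ∑_{σ ∈ S_n} ∏_i A i (σ i)`. -/
def permanent {n : ℕ}  (A : Matrix (Fin n) (Fin n) ℕ) : ℕ :=
  ∑ σ : Equiv.Perm (Fin n), ∏ i, A i (σ i)

/-- The `(0,1)`-matrix determined by the configuration `x` (1-indexed starting columns):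
entry `(i,j)` (with `j : Fin n` representing column `j+1`) is `1` iff
`x i ≤ j+1 ≤ x i + d - 1`. -/
def confMatrix (n d : ℕ) (x : Fin n → ℕ) : Matrix (Fin n) (Fin n) ℕ :=
  fun i j => if x i ≤ (j : ℕ) + 1 ∧ (j : ℕ) + 1 ≤ x i + d - 1 then 1 else 0

/-- A valid configuration for `Γ_n^d`: `1 ≤ x i ≤ n - d + 1` for all `i`. -/
def ValidConf (n d : ℕ) (x : Fin n → ℕ) : Prop :=
  ∀ i, 1 ≤ x i ∧ x i ≤ n - d + 1

/-- Membership in `Γ_n^d`: the set of `n × n` `(0,1)`-matrices each of whose rows has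
exactly `d` ones forming a contiguous block. -/
def IsGamma (n d : ℕ) (A : Matrix (Fin n) (Fin n) ℕ) : Prop :=
  ∃ x : Fin n → ℕ, ValidConf n d x ∧ A = confMatrix n d x

namespace MaxPerm

variable {n d : ℕ}

/-- The sum over permutations sending row `i` to column (index) `m` of the product of the
other rows' entries.  Depends on `x` only through rows `≠ i`. -/
def Sf (n d : ℕ) (x : Fin n → ℕ) (i : Fin n) (m : ℕ) : ℕ :=
  ∑ σ ∈ Finset.univ.filter (fun σ : Equiv.Perm (Fin n) => (σ i : ℕ) = m),
    ∏ i' ∈ Finset.univ.erase i, confMatrix n d x i' (σ i')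

theorem perm_decomp (x : Fin n → ℕ) (i : Fin n) (v : ℕ) (hd : 1 ≤ d)
    (hv : 1 ≤ v) (hvn : v + d - 1 ≤ n) :
    permanent (confMatrix n d (Function.update x i v)) =
      ∑ m ∈ Finset.Ico (v - 1) (v + d - 1), Sf n d x i m := by
  classical
  have h1 : permanent (confMatrix n d (Function.update x i v)) =
      ∑ σ : Equiv.Perm (Fin n),
        (if v ≤ (σ i : ℕ) + 1 ∧ (σ i : ℕ) + 1 ≤ v + d - 1 then 1 else 0) *
          ∏ i' ∈ Finset.univ.erase i, confMatrix n d x i' (σ i') := by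
    unfold permanent
    refine Finset.sum_congr rfl (fun σ _ => ?_)
    rw [← Finset.mul_prod_erase Finset.univ _ (Finset.mem_univ i)]
    congr 1
    · simp [confMatrix, Function.update_self]
    · refine Finset.prod_congr rfl (fun i' hi' => ?_)
      have : i' ≠ i := (Finset.mem_erase.1 hi').1
      simp [confMatrix, Function.update_of_ne this]
  rw [h1]
  have h2 : ∑ σ : Equiv.Perm (Fin n),
        (if v ≤ (σ i : ℕ) + 1 ∧ (σ i : ℕ) + 1 ≤ v + d - 1 then 1 else 0) *
          ∏ i' ∈ Finset.univ.erase i, confMatrix n d x i' (σ i')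
      = ∑ m ∈ Finset.range n,
          (if v ≤ m + 1 ∧ m + 1 ≤ v + d - 1 then 1 else 0) * Sf n d x i m := by
    rw [← Finset.sum_fiberwise_of_maps_to (g := fun σ : Equiv.Perm (Fin n) => (σ i : ℕ))
      (fun σ _ => Finset.mem_range.2 (σ i).isLt)]
    refine Finset.sum_congr rfl (fun m _ => ?_)
    rw [Sf, Finset.mul_sum]
    refine Finset.sum_congr rfl (fun σ hσ => ?_)
    have : (σ i : ℕ) = m := (Finset.mem_filter.1 hσ).2
    rw [this]
  rw [h2]
  have h3 : ∀ m ∈ Finset.range n,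
      (if v ≤ m + 1 ∧ m + 1 ≤ v + d - 1 then 1 else 0) * Sf n d x i m
        = if v ≤ m + 1 ∧ m + 1 ≤ v + d - 1 then Sf n d x i m else 0 := by
    intro m _
    split <;> simp
  rw [Finset.sum_congr rfl h3, Finset.sum_ite, Finset.sum_const_zero, add_zero]
  refine Finset.sum_congr ?_ (fun _ _ => rfl)
  ext m
  simp only [Finset.mem_filter, Finset.mem_range, Finset.mem_Ico]
  omega

/-- Core swap lemma: if column `c` is (entrywise, off row `i`) dominated by column `c'`,
then reserving `c'` for row `i` gives at most as many completions as reserving `c`. -/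
theorem Sf_swap (x : Fin n → ℕ) (i : Fin n) (c c' : Fin n)
    (h : ∀ i', i' ≠ i → confMatrix n d x i' c ≤ confMatrix n d x i' c') :
    Sf n d x i (c' : ℕ) ≤ Sf n d x i (c : ℕ) := by
  classical
  unfold Sf
  have hreidx :
      ∑ σ ∈ Finset.univ.filter (fun σ : Equiv.Perm (Fin n) => (σ i : ℕ) = (c' : ℕ)),
        ∏ i' ∈ Finset.univ.erase i, confMatrix n d x i' (σ i')
      = ∑ σ ∈ Finset.univ.filter (fun σ : Equiv.Perm (Fin n) => (σ i : ℕ) = (c : ℕ)),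
        ∏ i' ∈ Finset.univ.erase i, confMatrix n d x i' ((Equiv.swap c c' * σ) i') := by
    refine Finset.sum_nbij' (fun σ => Equiv.swap c c' * σ) (fun σ => Equiv.swap c c' * σ)
      ?_ ?_ ?_ ?_ ?_
    · intro σ hσ
      have h1 : σ i = c' := Fin.val_injective (Finset.mem_filter.1 hσ).2
      simp [h1, Equiv.swap_apply_right]
    · intro σ hσ
      have h1 : σ i = c := Fin.val_injective (Finset.mem_filter.1 hσ).2
      simp [h1, Equiv.swap_apply_left]
    · intro σ _; simp [← mul_assoc]
    · intro σ _; simp [← mul_assoc]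
    · intro σ hσ
      refine Finset.prod_congr rfl (fun i' _ => ?_)
      simp
  rw [hreidx]
  refine Finset.sum_le_sum (fun σ hσ => ?_)
  have hσi : σ i = c := Fin.val_injective (Finset.mem_filter.1 hσ).2
  refine Finset.prod_le_prod' (fun i' hi' => ?_)
  have hne : i' ≠ i := (Finset.mem_erase.1 hi').1
  simp only [Equiv.Perm.mul_apply]
  by_cases h1 : σ i' = c'
  · rw [h1, Equiv.swap_apply_right]; exact h i' hne
  · by_cases h2 : σ i' = c
    · exact absurd (σ.injective (h2.trans hσi.symm)) hne
    · rw [Equiv.swap_apply_of_ne_of_ne h2 h1]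

theorem Sf_left_mono (x : Fin n → ℕ) (i : Fin n) (m : ℕ)
    (hx : ∀ i', 1 ≤ x i') (hm : m + 2 ≤ d) :
    Sf n d x i (m + 1) ≤ Sf n d x i m := by
  classical
  by_cases hn : m + 1 < n
  · have hmn : m < n := by omega
    have := Sf_swap (d := d) x i ⟨m, hmn⟩ ⟨m + 1, hn⟩ (fun i' _ => ?_)
    · simpa using this
    · simp only [confMatrix]
      split
    

      · next hcov =>
        have := hx i'
        have : x i' ≤ m + 1 + 1 ∧ m + 1 + 1 ≤ x i' + d - 1 := by
          constructor <;> omega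
        simp [this]
      · simp
  · have : Finset.univ.filter (fun σ : Equiv.Perm (Fin n) => (σ i : ℕ) = m + 1) = ∅ := by
      ext σ
      simp only [Finset.mem_filter, Finset.mem_univ, true_and, Finset.notMem_empty, iff_false]
      have := (σ i).isLt; omega
    rw [Sf, this, Finset.sum_empty]
    exact Nat.zero_le _

theorem Sf_right_mono (x : Fin n → ℕ) (i : Fin n) (m : ℕ)
    (hx : ∀ i', x i' ≤ m + 1) (hn : m + 1 < n) :
    Sf n d x i m ≤ Sf n d x i (m + 1) := by
  classical
  have hmn : m < n := by omega
  have := Sf_swap (d := d) x i ⟨m + 1, hn⟩ ⟨m, hmn⟩ (fun i' _ => ?_)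
  · simpa using this
  · simp only [confMatrix]
    split
    · next hcov =>
      have := hx i'
      have : x i' ≤ m + 1 ∧ m + 1 ≤ x i' + d - 1 := by
        constructor <;> omega
      simp [this]
    · simp


/-- A convex function on `[a,b]` is maximized at an endpoint. -/
theorem convex_endpoint (g : ℕ → ℕ) (a b : ℕ)
    (hconv : ∀ t, a ≤ t → t + 2 ≤ b → 2 * g (t + 1) ≤ g t + g (t + 2)) :
    ∀ v, a ≤ v → v ≤ b → g v ≤ max (g a) (g b) := by
  have C : ∀ t, a ≤ t → t < b → g t ≤ max (g a) (g (t + 1)) := by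
    intro t
    induction t using Nat.strong_induction_on with
    | _ t ih =>
      intro hat htb
      by_cases hle : g t ≤ g (t + 1)
      · exact le_trans hle (le_max_right _ _)
      · push_neg at hle
        rcases Nat.eq_or_lt_of_le hat with heq | hlt
        · rw [← heq]; exact le_max_left _ _
        · have ht1 : a ≤ t - 1 := by omega
          have ht2 : (t - 1) + 2 ≤ b := by omega
          have hc := hconv (t - 1) ht1 ht2
          have he1 : t - 1 + 1 = t := by omega
          have he2 : t - 1 + 2 = t + 1 := by omega
          rw [he1, he2] at hc
          have hlt2 : g t < g (t - 1) := by omega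
          have := ih (t - 1) (by omega) (by omega) (by omega)
          rw [he1] at this
          rcases max_cases (g a) (g t) with ⟨hm, _⟩ | ⟨hm, _⟩
          · rw [hm] at this
            have : g t ≤ g a := by omega
            exact le_trans this (le_max_left _ _)
          · rw [hm] at this; omega
  intro v hav hvb
  have main : ∀ k v, a ≤ v → v ≤ b → b - v = k → g v ≤ max (g a) (g b) := by
    intro k
    induction k with
    | zero => intro v hav hvb hk
              have : v = b := by omega
              rw [this]; exact le_max_right _ _
    | succ k ih =>
        intro v hav hvb hk
        have h1 : g v ≤ max (g a) (g (v + 1)) := C v hav (by omega)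
        have h2 : g (v + 1) ≤ max (g a) (g b) := ih (v + 1) (by omega) (by omega) (by omega)
        rcases max_cases (g a) (g (v + 1)) with ⟨hm, _⟩ | ⟨hm, _⟩
        · rw [hm] at h1; exact le_trans h1 (le_max_left _ _)
        · rw [hm] at h1; exact le_trans h1 h2
  exact main (b - v) v hav hvb rfl

theorem exchange_step {r : ℕ} (hr : 1 ≤ r) (hrd : r ≤ d) (x : Fin (d + r) → ℕ)
    (hx : ∀ i', 1 ≤ x i' ∧ x i' ≤ r + 1) (i : Fin (d + r)) (v : ℕ)
    (hv1 : 1 ≤ v) (hv2 : v ≤ r + 1) :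
    permanent (confMatrix (d + r) d (Function.update x i v)) ≤
      max (permanent (confMatrix (d + r) d (Function.update x i 1)))
        (permanent (confMatrix (d + r) d (Function.update x i (r + 1)))) := by
  have hd : 1 ≤ d := le_trans hr hrd
  set G : ℕ → ℕ := fun w => ∑ m ∈ Finset.Ico (w - 1) (w + d - 1), Sf (d + r) d x i m with hG
  have hdecomp : ∀ w, 1 ≤ w → w ≤ r + 1 →
      permanent (confMatrix (d + r) d (Function.update x i w)) = G w := by
    intro w h1 h2
    exact perm_decomp x i w hd h1 (by omega)
  rw [hdecomp v hv1 hv2, hdecomp 1 le_rfl (by omega), hdecomp (r+1) (by omega) le_rfl]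
  refine convex_endpoint G 1 (r + 1) ?_ v hv1 hv2
  intro t ht1 ht2
  -- G t = Sf (t-1) + Mid₁,  G (t+1) = Mid₁ + Sf (t+d-1) = Sf t + Mid₂,
  -- G (t+2) = Mid₂ + Sf (t+d)
  have e1 : G t = Sf (d+r) d x i (t - 1) + ∑ m ∈ Finset.Ico t (t + d - 1), Sf (d+r) d x i m := by
    simp only [hG]
    have h0 : t - 1 < t + d - 1 := by omega
    rw [Finset.sum_eq_sum_Ico_succ_bot h0]
    have h1 : t - 1 + 1 = t := by omega
    rw [h1]
  have e2a : G (t+1) = (∑ m ∈ Finset.Ico t (t + d - 1), Sf (d+r) d x i m)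
      + Sf (d+r) d x i (t + d - 1) := by
    simp only [hG]
    have h1 : (t + 1) - 1 = t := by omega
    have h2 : (t + 1) + d - 1 = (t + d - 1) + 1 := by omega
    rw [h1, h2, Finset.sum_Ico_succ_top (by omega)]
  have e2b : G (t+1) = Sf (d+r) d x i t + ∑ m ∈ Finset.Ico (t+1) (t + d), Sf (d+r) d x i m := by
    simp only [hG]
    have h1 : (t + 1) - 1 = t := by omega
    have h2 : (t + 1) + d - 1 = t + d := by omega
    rw [h1, h2, Finset.sum_eq_sum_Ico_succ_bot (by omega)]
  have e3 : G (t+2) = (∑ m ∈ Finset.Ico (t+1) (t + d), Sf (d+r) d x i m)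
      + Sf (d+r) d x i (t + d) := by
    simp only [hG]
    have h1 : (t + 2) - 1 = t + 1 := by omega
    have h2 : (t + 2) + d - 1 = (t + d) + 1 := by omega
    rw [h1, h2, Finset.sum_Ico_succ_top (by omega)]
  have m1 : Sf (d+r) d x i t ≤ Sf (d+r) d x i (t - 1) := by
    have := Sf_left_mono (d := d) x i (t - 1) (fun i' => (hx i').1) (by omega)
    have ht : t - 1 + 1 = t := by omega
    rwa [ht] at this
  have m2 : Sf (d+r) d x i (t + d - 1) ≤ Sf (d+r) d x i (t + d) := by
    have := Sf_right_mono (d := d) x i (t + d - 1) (fun i' => by have := (hx i').2; omega) (by omega)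
    have ht : t + d - 1 + 1 = t + d := by omega
    rwa [ht] at this
  have : 2 * G (t+1) = G (t+1) + G (t+1) := by ring
  rw [this, e1, e3]
  calc G (t+1) + G (t+1)
      = ((∑ m ∈ Finset.Ico t (t + d - 1), Sf (d+r) d x i m) + Sf (d+r) d x i (t + d - 1))
        + (Sf (d+r) d x i t + ∑ m ∈ Finset.Ico (t+1) (t + d), Sf (d+r) d x i m) := by
        rw [← e2a, ← e2b]
    _ ≤ ((∑ m ∈ Finset.Ico t (t + d - 1), Sf (d+r) d x i m) + Sf (d+r) d x i (t + d))
        + (Sf (d+r) d x i (t - 1) + ∑ m ∈ Finset.Ico (t+1) (t + d), Sf (d+r) d x i m) := by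
        gcongr
    _ = (Sf (d+r) d x i (t - 1) + ∑ m ∈ Finset.Ico t (t + d - 1), Sf (d+r) d x i m)
        + ((∑ m ∈ Finset.Ico (t+1) (t + d), Sf (d+r) d x i m) + Sf (d+r) d x i (t + d)) := by
        ring


theorem base_case {d r : ℕ} (hr : 1 ≤ r) (hrd : r ≤ d) (x : Fin (d + r) → ℕ)
    (hx2 : ∀ i, x i = 1 ∨ x i = r + 1) :
    permanent (confMatrix (d + r) d x) ≤
      (d - r).factorial *
        ((((Finset.univ.filter (fun i => x i = 1)).card).descFactorial r) *
         (((Finset.univ.filter (fun i => x i = r + 1)).card).descFactorial r)) := by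
  classical
  -- Step A : permanent as a cardinality
  set Sset : Finset (Equiv.Perm (Fin (d+r))) :=
    Finset.univ.filter (fun σ => ∀ i, confMatrix (d+r) d x i (σ i) = 1) with hSs
  have stepA : permanent (confMatrix (d+r) d x) = Sset.card := by
    unfold permanent
    have : ∀ σ : Equiv.Perm (Fin (d+r)),
        (∏ i, confMatrix (d+r) d x i (σ i)) = if ∀ i, confMatrix (d+r) d x i (σ i) = 1 then 1 else 0 := by
      intro σ
      by_cases h : ∀ i, confMatrix (d+r) d x i (σ i) = 1
      · rw [if_pos h]
        exact Finset.prod_eq_one (fun i _ => h i)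
      · rw [if_neg h]
        push_neg at h
        obtain ⟨i, hi⟩ := h
        have h0 : confMatrix (d+r) d x i (σ i) = 0 := by
          unfold confMatrix at hi ⊢
          split <;> simp_all
        exact Finset.prod_eq_zero (Finset.mem_univ i) h0
    rw [Finset.sum_congr rfl (fun σ _ => this σ)]
    rw [Finset.sum_boole]
    simp [hSs]
  -- columns
  have hrn : r ≤ (d+r) := by omega
  have hdn : d ≤ (d+r) := by omega
  set leftc : Fin r → Fin (d+r) := fun t => ⟨(t : ℕ), by omega⟩ with hleftc
  set rightc : Fin r → Fin (d+r) := fun t => ⟨d + (t : ℕ), by have := t.isLt; omega⟩ with hrightc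
  set corec : Fin (d-r) → Fin (d+r) := fun t => ⟨r + (t : ℕ), by have := t.isLt; omega⟩ with hcorec
  -- membership facts
  have key : ∀ σ ∈ Sset, ∀ c : Fin (d+r),
      x (σ⁻¹ c) ≤ (c : ℕ) + 1 ∧ (c : ℕ) + 1 ≤ x (σ⁻¹ c) + d - 1 := by
    intro σ hσ c
    have h1 := (Finset.mem_filter.1 hσ).2 (σ⁻¹ c)
    rw [show σ (σ⁻¹ c) = c from σ.apply_symm_apply c] at h1
    unfold confMatrix at h1
    by_contra h
    rw [if_neg h] at h1
    exact absurd h1 one_ne_zero.symm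
  have keyL : ∀ σ ∈ Sset, ∀ t : Fin r, x (σ⁻¹ (leftc t)) = 1 := by
    intro σ hσ t
    have h1 := key σ hσ (leftc t)
    rcases hx2 (σ⁻¹ (leftc t)) with h | h
    · exact h
    · exfalso
      rw [h] at h1
      have : (leftc t : ℕ) = (t : ℕ) := rfl
      have ht := t.isLt
      omega
  have keyR : ∀ σ ∈ Sset, ∀ t : Fin r, x (σ⁻¹ (rightc t)) = r + 1 := by
    intro σ hσ t
    have h1 := key σ hσ (rightc t)
    rcases hx2 (σ⁻¹ (rightc t)) with h | h
    · exfalso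
      rw [h] at h1
      have : (rightc t : ℕ) = d + (t : ℕ) := rfl
      omega
    · exact h
  -- the projection map
  set Φ : Equiv.Perm (Fin (d+r)) → ((Fin r → Fin (d+r)) × (Fin r → Fin (d+r))) :=
    fun σ => (fun t => σ⁻¹ (leftc t), fun t => σ⁻¹ (rightc t)) with hΦ
  -- fibers have size ≤ (d-r)!
  have fiber_bound : ∀ p ∈ Sset.image Φ,
      (Sset.filter (fun σ => Φ σ = p)).card ≤ (d-r).factorial := by
    intro p hp
    set fib := Sset.filter (fun σ => Φ σ = p) with hfib
    rcases Finset.eq_empty_or_nonempty fib with he | ⟨σ₀, hσ₀⟩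
    · rw [he]; simp
    have hsig0S : σ₀ ∈ Sset := (Finset.mem_filter.1 hσ₀).1
    have hσ₀p : Φ σ₀ = p := (Finset.mem_filter.1 hσ₀).2
    set f : Fin r → Fin (d+r) := fun t => σ₀⁻¹ (leftc t) with hf
    set g : Fin r → Fin (d+r) := fun t => σ₀⁻¹ (rightc t) with hg
    have hpfg : p = (f, g) := by rw [← hσ₀p]
    have hfg : ∀ σ ∈ fib, (∀ t, σ⁻¹ (leftc t) = f t) ∧ (∀ t, σ⁻¹ (rightc t) = g t) := by
      intro σ hσ
      have := (Finset.mem_filter.1 hσ).2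
      rw [hpfg] at this
      have h1 := congrArg Prod.fst this
      have h2 := congrArg Prod.snd this
      exact ⟨fun t => congrFun h1 t, fun t => congrFun h2 t⟩
    set Ω : Finset (Fin (d+r)) := Finset.univ \ ((Finset.image f Finset.univ) ∪
      (Finset.image g Finset.univ)) with hΩ
    have hfinj : Function.Injective f := by
      intro t t' h
      have h3 := congrArg Fin.val (σ₀⁻¹.injective h)
      exact Fin.val_injective h3
    have hginj : Function.Injective g := by
      intro t t' h
      have := σ₀⁻¹.injective h
      have h2 : d + (t : ℕ) = d + (t' : ℕ) := congrArg Fin.val this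
      exact Fin.val_injective (by omega)
    have hdisj : Disjoint (Finset.image f Finset.univ) (Finset.image g Finset.univ) := by
      rw [Finset.disjoint_left]
      intro c hcf hcg
      obtain ⟨t, _, ht⟩ := Finset.mem_image.1 hcf
      obtain ⟨t', _, ht'⟩ := Finset.mem_image.1 hcg
      have := σ₀⁻¹.injective (ht.trans ht'.symm)
      have h2 : (t : ℕ) = d + (t' : ℕ) := congrArg Fin.val this
      have := t.isLt
      omega
    have hΩcard : Ω.card = (d-r) := by
      rw [hΩ, Finset.card_sdiff_of_subset (Finset.subset_univ _), Finset.card_union_of_disjoint hdisj,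
        Finset.card_image_of_injective _ hfinj, Finset.card_image_of_injective _ hginj]
      simp
      omega
    -- injection from the fiber into embeddings Fin (d-r) ↪ Ω
    have hmem : ∀ σ ∈ fib, ∀ t : Fin (d-r), σ⁻¹ (corec t) ∈ Ω := by
      intro σ hσ t
      rw [hΩ, Finset.mem_sdiff]
      refine ⟨Finset.mem_univ _, ?_⟩
      rw [Finset.mem_union]
      rintro (h | h)
      · obtain ⟨t', _, ht'⟩ := Finset.mem_image.1 h
        have hft' := (hfg σ hσ).1 t'
        have heq : σ⁻¹ (leftc t') = σ⁻¹ (corec t) := hft'.trans ht'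
        have heq2 := σ⁻¹.injective heq
        have h3 : (t' : ℕ) = r + (t : ℕ) := congrArg Fin.val heq2
        have := t'.isLt
        omega
      · obtain ⟨t', _, ht'⟩ := Finset.mem_image.1 h
        have hgt' := (hfg σ hσ).2 t'
        have heq : σ⁻¹ (rightc t') = σ⁻¹ (corec t) := hgt'.trans ht'
        have heq2 := σ⁻¹.injective heq
        have h3 : d + (t' : ℕ) = r + (t : ℕ) := congrArg Fin.val heq2
        have := t.isLt
        omega
    set ψ : (σ : Equiv.Perm (Fin (d+r))) → σ ∈ fib → (Fin (d-r) → {c // c ∈ Ω}) :=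
      fun σ hσ => fun t => ⟨σ⁻¹ (corec t), hmem σ hσ t⟩ with hψ
    -- σ is determined by f, g and ψ σ
    have hrecon : ∀ σ ∈ fib, ∀ σ' ∈ fib,
        (∀ t, σ⁻¹ (corec t) = σ'⁻¹ (corec t)) → σ = σ' := by
      intro σ hσ σ' hσ' hcore
      have hinv : σ⁻¹ = σ'⁻¹ := by
        apply Equiv.ext
        intro c
        by_cases h1 : (c : ℕ) < r
        · have e1 : c = leftc ⟨(c : ℕ), h1⟩ := by
            apply Fin.val_injective; rfl
          rw [e1, (hfg σ hσ).1 _, (hfg σ' hσ').1 _]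
        · by_cases h2 : (c : ℕ) < d
          · have hc : (c : ℕ) - r < (d-r) := by omega
            have e1 : c = corec ⟨(c : ℕ) - r, hc⟩ := by
              apply Fin.val_injective
              show (c : ℕ) = r + ((c : ℕ) - r)
              omega
            rw [e1, hcore _]
          · have hc : (c : ℕ) - d < r := by have := c.isLt; omega
            have e1 : c = rightc ⟨(c : ℕ) - d, hc⟩ := by
              apply Fin.val_injective
              show (c : ℕ) = d + ((c : ℕ) - d)
              omega
            rw [e1, (hfg σ hσ).2 _, (hfg σ' hσ').2 _]
      calc σ = (σ⁻¹)⁻¹ := by rw [inv_inv]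
        _ = (σ'⁻¹)⁻¹ := by rw [hinv]
        _ = σ' := by rw [inv_inv]
    -- now count the fiber
    have hψinjF : ∀ σ hσ, Function.Injective (ψ σ hσ) := by
      intro σ hσ t t' h
      have := congrArg Subtype.val h
      have h2 := σ⁻¹.injective this
      have h3 : r + (t : ℕ) = r + (t' : ℕ) := congrArg Fin.val h2
      exact Fin.val_injective (by omega)
    haveI hne : Nonempty (Fin (d-r) ↪ {c // c ∈ Ω}) :=
      ⟨⟨ψ σ₀ hσ₀, hψinjF σ₀ hσ₀⟩⟩
    have : fib.card ≤ Fintype.card (Fin (d-r) ↪ {c // c ∈ Ω}) := by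
      have := Finset.card_le_card_of_injOn
        (f := fun σ => if h : σ ∈ fib then (⟨ψ σ h, hψinjF σ h⟩ : Fin (d-r) ↪ {c // c ∈ Ω})
          else Classical.arbitrary _)
        (s := fib) (t := Finset.univ) ?_ ?_
      · simpa using this
      · intro σ hσ; exact Finset.mem_univ _
      · intro σ hσ σ' hσ' h
        simp only [dif_pos (Finset.mem_coe.1 hσ), dif_pos (Finset.mem_coe.1 hσ')] at h
        apply hrecon σ (Finset.mem_coe.1 hσ) σ' (Finset.mem_coe.1 hσ')
        intro t
        have := congrArg (fun (e : Fin (d-r) ↪ {c // c ∈ Ω}) => ((e t : {c // c ∈ Ω}) : Fin (d+r))) h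
        exact this
    calc fib.card ≤ Fintype.card (Fin (d-r) ↪ {c // c ∈ Ω}) := this
      _ = (Fintype.card {c // c ∈ Ω}).descFactorial (Fintype.card (Fin (d-r))) :=
          Fintype.card_embedding_eq
      _ = (d-r).descFactorial (d-r) := by rw [Fintype.card_coe, hΩcard, Fintype.card_fin]
      _ = (d-r).factorial := Nat.descFactorial_self (d-r)
  -- image bound
  set P₁ : Finset (Fin r → Fin (d+r)) :=
    Finset.univ.filter (fun f => Function.Injective f ∧ ∀ t, x (f t) = 1) with hP₁
  set P₂ : Finset (Fin r → Fin (d+r)) :=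
    Finset.univ.filter (fun f => Function.Injective f ∧ ∀ t, x (f t) = r + 1) with hP₂
  have himage : Sset.image Φ ⊆ P₁ ×ˢ P₂ := by
    intro p hp
    obtain ⟨σ, hσ, rfl⟩ := Finset.mem_image.1 hp
    rw [Finset.mem_product]
    constructor
    · rw [hP₁, Finset.mem_filter]
      refine ⟨Finset.mem_univ _, ?_, ?_⟩
      · intro t t' h
        have h3 := congrArg Fin.val (σ⁻¹.injective h)
        exact Fin.val_injective h3
      · intro t; exact keyL σ hσ t
    · rw [hP₂, Finset.mem_filter]
      refine ⟨Finset.mem_univ _, ?_, ?_⟩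
      · intro t t' h
        have h2 := σ⁻¹.injective h
        have h3 : d + (t : ℕ) = d + (t' : ℕ) := congrArg Fin.val h2
        exact Fin.val_injective (by omega)
      · intro t; exact keyR σ hσ t
  -- card of P₁ and P₂
  have cardP : ∀ (w : ℕ), (Finset.univ.filter
      (fun f : Fin r → Fin (d+r) => Function.Injective f ∧ ∀ t, x (f t) = w)).card ≤
      ((Finset.univ.filter (fun i => x i = w)).card).descFactorial r := by
    intro w
    set Lsub := {i : Fin (d+r) // x i = w}
    rcases Finset.eq_empty_or_nonempty (Finset.univ.filter
        (fun f : Fin r → Fin (d+r) => Function.Injective f ∧ ∀ t, x (f t) = w)) with he | hne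
    · rw [he]; simp
    obtain ⟨f₀, hf₀⟩ := hne
    have hf₀' := (Finset.mem_filter.1 hf₀).2
    haveI : Nonempty (Fin r ↪ Lsub) :=
      ⟨⟨fun t => (⟨f₀ t, hf₀'.2 t⟩ : Lsub), fun t t' ht => hf₀'.1 (congrArg Subtype.val ht)⟩⟩
    have : (Finset.univ.filter
        (fun f : Fin r → Fin (d+r) => Function.Injective f ∧ ∀ t, x (f t) = w)).card ≤
        Fintype.card (Fin r ↪ Lsub) := by
      have := Finset.card_le_card_of_injOn
        (f := fun f => if h : Function.Injective f ∧ ∀ t, x (f t) = w then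
            (⟨fun t => (⟨f t, h.2 t⟩ : Lsub),
              fun t t' ht => h.1 (congrArg Subtype.val ht)⟩ : Fin r ↪ Lsub)
          else Classical.arbitrary _)
        (s := Finset.univ.filter
          (fun f : Fin r → Fin (d+r) => Function.Injective f ∧ ∀ t, x (f t) = w))
        (t := Finset.univ) ?_ ?_
      · simpa using this
      · intro f hf; exact Finset.mem_univ _
      · intro f hf f' hf' h
        have hf1 := (Finset.mem_filter.1 (Finset.mem_coe.1 hf)).2
        have hf2 := (Finset.mem_filter.1 (Finset.mem_coe.1 hf')).2
        simp only [dif_pos hf1, dif_pos hf2] at h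
        funext t
        have := congrArg (fun (e : Fin r ↪ Lsub) => ((e t : Lsub) : Fin (d+r))) h
        exact this
    calc _ ≤ Fintype.card (Fin r ↪ Lsub) := this
      _ = (Fintype.card Lsub).descFactorial (Fintype.card (Fin r)) := Fintype.card_embedding_eq
      _ = ((Finset.univ.filter (fun i => x i = w)).card).descFactorial r := by
          rw [Fintype.card_subtype, Fintype.card_fin]
  -- combine
  rw [stepA]
  calc Sset.card = ∑ p ∈ Sset.image Φ, (Sset.filter (fun σ => Φ σ = p)).card :=
        Finset.card_eq_sum_card_fiberwise (fun σ hσ => Finset.mem_image_of_mem Φ hσ)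
    _ ≤ ∑ _p ∈ Sset.image Φ, (d-r).factorial := Finset.sum_le_sum fiber_bound
    _ = (Sset.image Φ).card * (d-r).factorial := by rw [Finset.sum_const, smul_eq_mul]
    _ ≤ (P₁ ×ˢ P₂).card * (d-r).factorial := by
        exact Nat.mul_le_mul_right _ (Finset.card_le_card himage)
    _ = (P₁.card * P₂.card) * (d-r).factorial := by rw [Finset.card_product]
    _ ≤ ((((Finset.univ.filter (fun i => x i = 1)).card).descFactorial r) *
         (((Finset.univ.filter (fun i => x i = r + 1)).card).descFactorial r)) * (d-r).factorial := by
        exact Nat.mul_le_mul_right _ (Nat.mul_le_mul (cardP 1) (cardP (r + 1)))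
    _ = (d-r).factorial * ((((Finset.univ.filter (fun i => x i = 1)).card).descFactorial r) *
         (((Finset.univ.filter (fun i => x i = r + 1)).card).descFactorial r)) := by ring


theorem bal_mul {u v s : ℕ} (h : u + v = s) : u * v ≤ (s / 2) * ((s + 1) / 2) := by
  rcases le_total u v with huv | huv
  · have h1 : u ≤ s / 2 := by omega
    have h2 : u ≤ (s + 1) / 2 := by omega
    obtain ⟨e, he⟩ : ∃ e, s / 2 = u + e := ⟨s / 2 - u, by omega⟩
    have hv : v = (s + 1) / 2 + e := by omega
    calc u * v = u * ((s + 1) / 2) + u * e := by rw [hv]; ring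
      _ ≤ u * ((s + 1) / 2) + ((s + 1) / 2) * e := by
          exact Nat.add_le_add_left (Nat.mul_le_mul_right e h2) _
      _ = (u + e) * ((s + 1) / 2) := by ring
      _ = (s / 2) * ((s + 1) / 2) := by rw [he]
  · have h1 : v ≤ s / 2 := by omega
    have h2 : v ≤ (s + 1) / 2 := by omega
    obtain ⟨e, he⟩ : ∃ e, s / 2 = v + e := ⟨s / 2 - v, by omega⟩
    have hu : u = (s + 1) / 2 + e := by omega
    calc u * v = v * ((s + 1) / 2) + v * e := by rw [hu]; ring
      _ ≤ v * ((s + 1) / 2) + ((s + 1) / 2) * e := by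
          exact Nat.add_le_add_left (Nat.mul_le_mul_right e h2) _
      _ = (v + e) * ((s + 1) / 2) := by ring
      _ = (s / 2) * ((s + 1) / 2) := by rw [he]

theorem factor_bal {a b n t : ℕ} (h : a + b = n) :
    (a - t) * (b - t) ≤ (n / 2 - t) * ((n + 1) / 2 - t) := by
  by_cases ha : a ≤ t
  · have : a - t = 0 := by omega
    simp [this]
  · by_cases hb : b ≤ t
    · have : b - t = 0 := by omega
      simp [this]
    · have hs : (a - t) + (b - t) = n - 2 * t := by omega
      have := bal_mul hs
      have e1 : (n - 2 * t) / 2 = n / 2 - t := by omega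
      have e2 : (n - 2 * t + 1) / 2 = (n + 1) / 2 - t := by omega
      rw [e1, e2] at this
      exact this

theorem dF_bal {a b n : ℕ} (h : a + b = n) (r : ℕ) :
    a.descFactorial r * b.descFactorial r ≤
      (n / 2).descFactorial r * ((n + 1) / 2).descFactorial r := by
  induction r with
  | zero => simp
  | succ r ih =>
      rw [Nat.descFactorial_succ, Nat.descFactorial_succ, Nat.descFactorial_succ,
        Nat.descFactorial_succ]
      calc (a - r) * a.descFactorial r * ((b - r) * b.descFactorial r)
          = ((a - r) * (b - r)) * (a.descFactorial r * b.descFactorial r) := by ring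
        _ ≤ ((n / 2 - r) * ((n + 1) / 2 - r)) *
            ((n / 2).descFactorial r * ((n + 1) / 2).descFactorial r) :=
            Nat.mul_le_mul (factor_bal h) ih
        _ = (n / 2 - r) * (n / 2).descFactorial r *
            (((n + 1) / 2 - r) * ((n + 1) / 2).descFactorial r) := by ring

theorem arith_eq {d r : ℕ} (hrd : r ≤ d) :
    (d - r).factorial * (((d + r) / 2).descFactorial r * ((d + r + 1) / 2).descFactorial r) =
      Nat.choose (d - r) ((d - r) / 2) * ((d + r) / 2).factorial *
        ((d + r + 1) / 2).factorial := by
  set k := d - r with hk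
  have h1 : (d + r) / 2 - r = k / 2 := by omega
  have h2 : (d + r + 1) / 2 - r = (k + 1) / 2 := by omega
  have h3 : r ≤ (d + r) / 2 := by omega
  have h4 : r ≤ (d + r + 1) / 2 := by omega
  have h5 : k / 2 ≤ k := Nat.div_le_self _ _
  have h6 : k - k / 2 = (k + 1) / 2 := by omega
  have f1 : (k / 2).factorial * ((d + r) / 2).descFactorial r = ((d + r) / 2).factorial := by
    rw [← h1]; exact Nat.factorial_mul_descFactorial h3
  have f2 : ((k + 1) / 2).factorial * ((d + r + 1) / 2).descFactorial r =
      ((d + r + 1) / 2).factorial := by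
    rw [← h2]; exact Nat.factorial_mul_descFactorial h4
  have f3 : Nat.choose k (k / 2) * (k / 2).factorial * ((k + 1) / 2).factorial = k.factorial := by
    rw [← h6]; exact Nat.choose_mul_factorial_mul_factorial h5
  have key : ((k / 2).factorial * ((k + 1) / 2).factorial) *
      (k.factorial * (((d + r) / 2).descFactorial r * ((d + r + 1) / 2).descFactorial r)) =
      ((k / 2).factorial * ((k + 1) / 2).factorial) *
      (Nat.choose k (k / 2) * ((d + r) / 2).factorial * ((d + r + 1) / 2).factorial) := by
    calc ((k / 2).factorial * ((k + 1) / 2).factorial) *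
        (k.factorial * (((d + r) / 2).descFactorial r * ((d + r + 1) / 2).descFactorial r))
        = k.factorial * (((k / 2).factorial * ((d + r) / 2).descFactorial r) *
            (((k + 1) / 2).factorial * ((d + r + 1) / 2).descFactorial r)) := by ring
      _ = k.factorial * (((d + r) / 2).factorial * ((d + r + 1) / 2).factorial) := by
            rw [f1, f2]
      _ = (Nat.choose k (k / 2) * (k / 2).factorial * ((k + 1) / 2).factorial) *
            (((d + r) / 2).factorial * ((d + r + 1) / 2).factorial) := by rw [f3]
      _ = ((k / 2).factorial * ((k + 1) / 2).factorial) *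
            (Nat.choose k (k / 2) * ((d + r) / 2).factorial * ((d + r + 1) / 2).factorial) := by
            ring
  have hpos : 0 < (k / 2).factorial * ((k + 1) / 2).factorial :=
    Nat.mul_pos (Nat.factorial_pos _) (Nat.factorial_pos _)
  exact Nat.eq_of_mul_eq_mul_left hpos key

theorem two_point_bound {d r : ℕ} (hr : 1 ≤ r) (hrd : r ≤ d) (x : Fin (d + r) → ℕ)
    (hx2 : ∀ i, x i = 1 ∨ x i = r + 1) :
    permanent (confMatrix (d + r) d x) ≤
      Nat.choose (d - r) ((d - r) / 2) * ((d + r) / 2).factorial *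
        ((d + r + 1) / 2).factorial := by
  classical
  have hab : (Finset.univ.filter (fun i => x i = 1)).card +
      (Finset.univ.filter (fun i : Fin (d + r) => x i = r + 1)).card = d + r := by
    have hcongr : Finset.univ.filter (fun i : Fin (d + r) => x i = r + 1) =
        Finset.univ.filter (fun i : Fin (d + r) => ¬ (x i = 1)) := by
      apply Finset.filter_congr
      intro i _
      rcases hx2 i with h | h <;> simp [h] <;> omega
    rw [hcongr, Finset.card_filter_add_card_filter_not]
    simp
  calc permanent (confMatrix (d + r) d x)
      ≤ (d - r).factorial *
        ((((Finset.univ.filter (fun i => x i = 1)).card).descFactorial r) *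
         (((Finset.univ.filter (fun i => x i = r + 1)).card).descFactorial r)) :=
        base_case hr hrd x hx2
    _ ≤ (d - r).factorial *
        (((d + r) / 2).descFactorial r * ((d + r + 1) / 2).descFactorial r) :=
        Nat.mul_le_mul_left _ (dF_bal hab r)
    _ = Nat.choose (d - r) ((d - r) / 2) * ((d + r) / 2).factorial *
        ((d + r + 1) / 2).factorial := arith_eq hrd

theorem main_bound {d r : ℕ} (hr : 1 ≤ r) (hrd : r ≤ d) (x : Fin (d + r) → ℕ)
    (hx : ∀ i, 1 ≤ x i ∧ x i ≤ r + 1) :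
    permanent (confMatrix (d + r) d x) ≤
      Nat.choose (d - r) ((d - r) / 2) * ((d + r) / 2).factorial *
        ((d + r + 1) / 2).factorial := by
  classical
  have main : ∀ N (x : Fin (d + r) → ℕ), (∀ i, 1 ≤ x i ∧ x i ≤ r + 1) →
      (∑ i, min (x i - 1) (r + 1 - x i)) ≤ N →
      permanent (confMatrix (d + r) d x) ≤
        Nat.choose (d - r) ((d - r) / 2) * ((d + r) / 2).factorial *
          ((d + r + 1) / 2).factorial := by
    intro N
    induction N with
    | zero =>
        intro x hx hsum
        apply two_point_bound hr hrd
        intro i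
        have h0 : min (x i - 1) (r + 1 - x i) = 0 := by
          have hle : min (x i - 1) (r + 1 - x i) ≤ ∑ j, min (x j - 1) (r + 1 - x j) :=
            Finset.single_le_sum (f := fun j => min (x j - 1) (r + 1 - x j))
              (fun j _ => Nat.zero_le _) (Finset.mem_univ i)
          omega
        have := hx i
        omega
    | succ N ih =>
        intro x hx hsum
        by_cases htwo : ∀ i, x i = 1 ∨ x i = r + 1
        · exact two_point_bound hr hrd x htwo
        · push_neg at htwo
          obtain ⟨i, hi1, hi2⟩ := htwo
          have hxi : 2 ≤ x i ∧ x i ≤ r := by have := hx i; omega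
          -- measure decreases for both updates
          have hmes : ∀ w, w = 1 ∨ w = r + 1 →
              (∑ j, min (Function.update x i w j - 1) (r + 1 - Function.update x i w j)) ≤ N := by
            intro w hw
            have hsplit : ∀ y : Fin (d + r) → ℕ,
                (∑ j, min (y j - 1) (r + 1 - y j)) =
                (∑ j ∈ Finset.univ.erase i, min (y j - 1) (r + 1 - y j)) +
                  min (y i - 1) (r + 1 - y i) :=
              fun y => (Finset.sum_erase_add _ _ (Finset.mem_univ i)).symm
            have he : ∀ j ∈ Finset.univ.erase i,
                min (Function.update x i w j - 1) (r + 1 - Function.update x i w j) =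
                min (x j - 1) (r + 1 - x j) := by
              intro j hj
              rw [Function.update_of_ne (Finset.mem_erase.1 hj).1]
            have h1 := hsplit (Function.update x i w)
            have h2 := hsplit x
            rw [Finset.sum_congr rfl he] at h1
            have h3 : min (Function.update x i w i - 1) (r + 1 - Function.update x i w i) = 0 := by
              rw [Function.update_self]
              rcases hw with h | h <;> simp [h]
            have h4 : 1 ≤ min (x i - 1) (r + 1 - x i) := by omega
            omega
          have hupd : ∀ w, 1 ≤ w → w ≤ r + 1 → ∀ j,
              1 ≤ Function.update x i w j ∧ Function.update x i w j ≤ r + 1 := by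
            intro w hw1 hw2 j
            by_cases hj : j = i
            · subst hj; rw [Function.update_self]; exact ⟨hw1, hw2⟩
            · rw [Function.update_of_ne hj]; exact hx j
          have hexch := exchange_step hr hrd x hx i (x i) (by omega) (by omega)
          rw [Function.update_eq_self i x] at hexch
          have b1 := ih (Function.update x i 1) (hupd 1 le_rfl (by omega)) (hmes 1 (Or.inl rfl))
          have b2 := ih (Function.update x i (r + 1)) (hupd (r + 1) (by omega) le_rfl)
            (hmes (r + 1) (Or.inr rfl))
          rcases max_cases (permanent (confMatrix (d + r) d (Function.update x i 1)))
            (permanent (confMatrix (d + r) d (Function.update x i (r + 1)))) with ⟨hm, _⟩ | ⟨hm, _⟩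
          · rw [hm] at hexch; omega
          · rw [hm] at hexch; omega
  exact main _ x hx le_rfl

end MaxPerm

/-- For `n = d + r` with `0 < r ≤ d`, every `A ∈ Γ_n^d` satisfies
`per(A) ≤ C(d-r, ⌊(d-r)/2⌋) · ⌊(d+r)/2⌋! · ⌈(d+r)/2⌉!`. -/
theorem max_permanent_bound (d r : ℕ) (hr : 0 < r) (hrd : r ≤ d)
    (A : Matrix (Fin (d + r)) (Fin (d + r)) ℕ) (hA : IsGamma (d + r) d A) :
    permanent A ≤
      Nat.choose (d - r) ((d - r) / 2) * ((d + r) / 2).factorial *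
        ((d + r + 1) / 2).factorial := by
  obtain ⟨x, hx, rfl⟩ := hA
  apply MaxPerm.main_bound hr hrd
  intro i
  have := hx i
  omega
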